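/- Let N ∈ ℕ, m ∈ ℤ with m > N, a ∈ ℕ with a ≥ m, q ∈ ℤ with max(0, N-a+m) ≤ q ≤ 2N, and set λ := N+1-a-q. Then β(λ,N,a,m) is a (real and) strictly positive number. -/

import Mathlib

noncomputable section

open Polynomial Finset

/-- The space `Pol_b[t]_even`: span of the monomials `t^(b-2i)`, `0 ≤ i ≤ ⌊b/2⌋`
(zero space when `b < 0`). -/
def polEven (b : ℤ) (f : ℂ[X]) : Prop :=
  ∀ n : ℕ, f.coeff n ≠ 0 → (n : ℤ) ≤ b ∧ (2 : ℤ) ∣ (b - n)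

/-- Imaginary Gegenbauer operator `S_ℓ^μ`. -/
def gegenS (μ : ℂ) (ℓ : ℤ) (f : ℂ[X]) : ℂ[X] :=
  -((1 + X ^ 2) * derivative (derivative f)
      + (1 + 2 * C μ) * X * derivative f
      - C ((ℓ : ℂ) * ((ℓ : ℂ) + 2 * μ)) * f)

/-- Euler operator `ϑ_t`. -/
def euler (f : ℂ[X]) : ℂ[X] := X * derivative f

/-- Renormalized Gegenbauer polynomial `C̃_n^μ(z)` for a natural number degree `n`. -/
def gegenC (μ : ℂ) (n : ℕ) : ℂ[X] :=
  ∑ k ∈ range (n / 2 + 1),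
    C ((-1 : ℂ) ^ k / ((k.factorial : ℂ) * ((n - 2 * k).factorial : ℂ)) *
        ∏ s ∈ range (n / 2 - k), (μ + (((n + 1) / 2 : ℕ) : ℂ) + (s : ℂ))) *
      (C 2 * X) ^ (n - 2 * k)

/-- `C̃_ℓ^μ(z)` for `ℓ : ℤ` (zero for `ℓ < 0`). -/
def gegenCZ (μ : ℂ) (ℓ : ℤ) : ℂ[X] := if 0 ≤ ℓ then gegenC μ ℓ.toNat else 0

/-- `C̃_ℓ^μ(it)`: substitution `z = it`. -/
def gegenCit (μ : ℂ) (ℓ : ℤ) : ℂ[X] := (gegenCZ μ ℓ).comp (C Complex.I * X)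

/-- `γ(μ, ℓ)`. -/
def gam (μ : ℂ) (ℓ : ℤ) : ℂ := if ℓ % 2 = 0 then μ + ((ℓ / 2 : ℤ) : ℂ) else 1

/-- `Γ(x+k)/Γ(x)` interpreted as a finite product (reciprocal for `k < 0`). -/
def gratio (x : ℂ) (k : ℤ) : ℂ :=
  if 0 ≤ k then ∏ i ∈ range k.toNat, (x + (i : ℂ))
  else (∏ i ∈ range (-k).toNat, (x + (k : ℂ) + (i : ℂ)))⁻¹

/-- `Γ(z₁)/Γ(z₂)` at integer arguments, as a finite product. -/
def gq (z₁ z₂ : ℤ) : ℂ := gratio (z₂ : ℂ) (z₁ - z₂)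

/-- The set `Λ(N,a,m)`, regarded as a subset of `ℂ`. -/
def LambdaSet (N a : ℕ) (m : ℤ) : Set ℂ :=
  { x | ∃ q : ℤ, max 0 ((N : ℤ) - a + m) ≤ q ∧ q ≤ 2 * N ∧
      x = (N : ℂ) + 1 - (a : ℂ) - (q : ℂ) }

/-- The set `M_ℓ^k`, regarded as a subset of `ℂ`. -/
def Mset (ℓ k : ℤ) : Set ℂ :=
  { x | ∃ d : ℤ, 0 ≤ d ∧ d ≤ ℓ / 2 - k - 1 ∧ x = -(((ℓ + 1) / 2 : ℤ) : ℂ) - (d : ℂ) }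

/-- The solution space `Ξ(λ,a,N,m)` of the system (A_j^±), (B_j^±), realized as
the set of tuples `(f_{-N},…,f_N)`, encoded as functions `ℤ → ℂ[X]` vanishing for `|j| > N`. -/
def XiSet (lam : ℂ) (a N : ℕ) (m : ℤ) : Set (ℤ → ℂ[X]) :=
  { f |
    (∀ j : ℤ, (N : ℤ) < |j| → f j = 0) ∧
    (∀ j : ℤ, |j| ≤ (N : ℤ) → polEven ((a : ℤ) - m + j) (f j)) ∧
    (∀ j : ℤ, 0 ≤ j → j ≤ (N : ℤ) →
      gegenS (lam + (j : ℂ) - 1) ((a : ℤ) + m - j) (f j)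
        - C (2 * ((N : ℂ) - (j : ℂ))) * derivative (f (j + 1)) = 0) ∧
    (∀ j : ℤ, 0 ≤ j → j ≤ (N : ℤ) →
      gegenS (lam + (j : ℂ) - 1) ((a : ℤ) - m - j) (f (-j))
        + C (2 * ((N : ℂ) - (j : ℂ))) * derivative (f (-j - 1)) = 0) ∧
    (∀ j : ℤ, 1 ≤ j → j ≤ (N : ℤ) →
      C (2 * (-(m : ℂ)) * (lam + (a : ℂ) - 1)) * f j
        + C (2 * (j : ℂ)) * (C (lam - 1) * f j + euler (f j))
        + C ((N : ℂ) - (j : ℂ)) * derivative (f (j + 1))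
        + C ((N : ℂ) + (j : ℂ)) * derivative (f (j - 1)) = 0) ∧
    (∀ j : ℤ, 1 ≤ j → j ≤ (N : ℤ) →
      C (2 * (m : ℂ) * (lam + (a : ℂ) - 1)) * f (-j)
        + C (2 * (j : ℂ)) * (C (lam - 1) * f (-j) + euler (f (-j)))
        - C ((N : ℂ) + (j : ℂ)) * derivative (f (-j + 1))
        - C ((N : ℂ) - (j : ℂ)) * derivative (f (-j - 1)) = 0) }

/-- The constant `C_{j,r}^+`. -/
def Cp (lam : ℂ) (a N : ℕ) (m : ℤ) (j r : ℕ) : ℂ :=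
  ((N - j).choose r : ℂ) * (((2 * N - r).factorial : ℂ) / ((N + j).factorial : ℂ)) *
    (∏ i ∈ range r, ((N : ℂ) - (m : ℂ) - (i : ℂ))) *
    (∏ i ∈ range r, (lam + (a : ℂ) - (N : ℂ) - 1 + (i : ℂ)))

/-- The constant `C_{j,r}^-`. -/
def Cm (lam : ℂ) (a N : ℕ) (m : ℤ) (j r : ℕ) : ℂ :=
  ((N - j).choose r : ℂ) * (((2 * N - r).factorial : ℂ) / ((N + j).factorial : ℂ)) *
    (∏ i ∈ range r, ((N : ℂ) + (m : ℂ) - (i : ℂ))) *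
    (∏ i ∈ range r, (lam + (a : ℂ) - (N : ℂ) - 1 + (i : ℂ)))

/-- The gamma factor `Γ_j^+`. -/
def GammaP (lam : ℂ) (a N : ℕ) (m : ℤ) (j : ℕ) : ℂ :=
  ∏ d ∈ range (N - j), gam (lam + (N : ℂ) - 1) ((a : ℤ) + m - (N : ℤ) - ((d : ℤ) + 1))

/-- The gamma factor `Γ_j^-`. -/
def GammaM (lam : ℂ) (a N : ℕ) (m : ℤ) (j : ℕ) : ℂ :=
  ∏ d ∈ range (N - j), gam (lam + (N : ℂ) - 1) ((a : ℤ) - m - (N : ℤ) - ((d : ℤ) + 1))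

/-- The constant `D_{j,r}` (with parameter `q`). -/
def Dc (N : ℕ) (m q : ℤ) (j r : ℕ) : ℂ :=
  ((N - j).choose r : ℂ) * (((2 * N - r).factorial : ℂ) / ((N + j).factorial : ℂ)) *
    (∏ i ∈ range r, ((N : ℂ) + (m : ℂ) - (i : ℂ))) *
    (∏ i ∈ range r, ((q : ℂ) - 2 * (N : ℂ) + (i : ℂ)))

/-- Binomial coefficient with integer upper argument: `binom(x,k) = (∏_{i<k}(x-i))/k!`. -/
def zbinom (x : ℤ) (k : ℕ) : ℂ := (∏ i ∈ range k, ((x : ℂ) - (i : ℂ))) / (k.factorial : ℂ)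

/-- The gamma factor `Γ(d,r)` of the paper (for integral `λ = λz`, `ν = νz`). -/
def GammaAB (N : ℕ) (m lamz nuz : ℤ) (d r : ℕ) : ℂ :=
  (d.choose r : ℂ) *
    gq (lamz + (nuz - lamz - m + (N : ℤ) - (d : ℤ) - 1) / 2)
       (lamz + (nuz - lamz - m - 1) / 2) *
    (((2 * N - r).factorial : ℂ) / (N.factorial : ℂ)) *
    (∏ i ∈ range r, ((N : ℂ) + (m : ℂ) - (i : ℂ)))

/-- The constant `A(d,r)` of the paper (for integral `λ = λz`, `ν = νz`). -/
def Acoef (N : ℕ) (m lamz nuz : ℤ) (d r : ℕ) : ℂ :=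
  (-1 : ℂ) ^ (nuz - 1) * GammaAB N m lamz nuz d r *
    gq (lamz + (-nuz - lamz - m + (N : ℤ) - (d : ℤ) + 1) / 2)
       (lamz + (nuz - lamz - m + (N : ℤ) - (d : ℤ) - 1) / 2) *
    ∏ i ∈ range r, ((N : ℂ) + (nuz : ℂ) - ((i : ℂ) + 1))

/-- The constant `B(d,r)` of the paper (for integral `λ = λz`, `ν = νz`). -/
def Bcoef (N : ℕ) (m lamz nuz : ℤ) (d r : ℕ) : ℂ :=
  (-1 : ℂ) ^ ((d : ℤ) - (N : ℤ)) * GammaAB N m lamz nuz (2 * N - d) r *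
    ∏ i ∈ range r, ((N : ℂ) - (nuz : ℂ) + 2 - ((i : ℂ) + 1))

/-- The predicate `(E_j^+)` on `f_j`. -/
def Eplus (lam : ℂ) (a N : ℕ) (m : ℤ) (qp : ℂ) (j : ℕ) (fj : ℂ[X]) : Prop :=
  C ((-Complex.I) ^ (N - j) * (((2 * N).factorial : ℂ) / ((N + j).factorial : ℂ)) *
      GammaP lam a N m j) * fj
    = C qp * ∑ r ∈ range (N - j + 1),
        C (Cp lam a N m j r) *
          gegenCit (lam + (N : ℂ) - 1 - (r : ℂ)) ((a : ℤ) + m - 2 * (N : ℤ) + (j : ℤ) + 2 * (r : ℤ))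

/-- The predicate `(E_j^-)` on `f_{-j}`. -/
def Eminus (lam : ℂ) (a N : ℕ) (m : ℤ) (qm : ℂ) (j : ℕ) (fj : ℂ[X]) : Prop :=
  C (Complex.I ^ (N - j) * (((2 * N).factorial : ℂ) / ((N + j).factorial : ℂ)) *
      GammaM lam a N m j) * fj
    = C qm * ∑ r ∈ range (N - j + 1),
        C (Cm lam a N m j r) *
          gegenCit (lam + (N : ℂ) - 1 - (r : ℂ)) ((a : ℤ) - m - 2 * (N : ℤ) + (j : ℤ) + 2 * (r : ℤ))

/-- The constant `C_{0,r}(m')` with integer parameter `a`. -/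
def C0r (lam : ℂ) (N : ℕ) (a m' : ℤ) (r : ℕ) : ℂ :=
  (N.choose r : ℂ) * (((2 * N - r).factorial : ℂ) / (N.factorial : ℂ)) *
    (∏ i ∈ range r, ((N : ℂ) - (m' : ℂ) - (i : ℂ))) *
    (∏ i ∈ range r, (lam + (a : ℂ) - (N : ℂ) - 1 + (i : ℂ)))

/-- `α(λ,N,a,m')`. -/
def alphaF (lam : ℂ) (N : ℕ) (a m' : ℤ) : ℂ :=
  ∑ r ∈ range (N + 1), (-1 : ℂ) ^ r * C0r lam N a m' r *
    ∏ i ∈ range (N - r), ((((a + m') / 2 : ℤ) : ℂ) - ((i : ℂ) + 1))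

/-- `β(λ,N,a,m')`. -/
def betaF (lam : ℂ) (N : ℕ) (a m' : ℤ) : ℂ :=
  ∑ r ∈ range (N + 1), (-1 : ℂ) ^ r * C0r lam N a m' r *
    ∏ i ∈ range (N - r), ((((a + m' + 2) / 2 : ℤ) : ℂ) - ((i : ℂ) + 1))

/-- The polynomial function `P(λ)`. -/
def Pf (N : ℕ) (a m : ℤ) (lam : ℂ) : ℂ :=
  (lam + (((a + m - 1) / 2 : ℤ) : ℂ)) * (((a + m) / 2 : ℤ) : ℂ) *
      alphaF lam N a m * betaF lam N a (-m)
    - (lam + (((a - m - 1) / 2 : ℤ) : ℂ)) * (((a - m) / 2 : ℤ) : ℂ) *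
      alphaF lam N a (-m) * betaF lam N a m

/-- The polynomial function `Q(λ)`. -/
def Qf (N : ℕ) (a m : ℤ) (lam : ℂ) : ℂ :=
  (∏ i ∈ range (N + 1), ((m : ℂ) + (i : ℂ))) *
    (∏ i ∈ range N, (((i : ℂ) + 1) - (m : ℂ))) *
    ∏ q ∈ range (2 * N + 1), (lam - (N : ℂ) - 1 + (a : ℂ) + (q : ℂ))

/-- `α̃(a,m')`. -/
def alphaTilde (N q : ℕ) (a m' : ℤ) : ℂ :=
  ∑ r ∈ range (min q N + 1),
    (N.choose r : ℂ) * (((2 * N - r).factorial : ℂ) / ((2 * N - q).factorial : ℂ)) *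
      ((q.factorial : ℂ) / ((q - r).factorial : ℂ)) *
      (∏ i ∈ range r, ((N : ℂ) - (m' : ℂ) - (i : ℂ))) *
      (∏ i ∈ Finset.Ico r q, ((((a + m') / 2 : ℤ) : ℂ) - (N : ℂ) + (i : ℂ)))

/-- The explicit generating tuple of `Ξ(λ,a,N,m)` of Theorem 4.3 (statement 1). -/
def F1 (N a : ℕ) (m q : ℤ) : ℤ → ℂ[X] := fun j =>
  let lamz : ℤ := (N : ℤ) + 1 - a - q
  let nuz : ℤ := (N : ℤ) + 1 - q
  let lam : ℂ := (lamz : ℂ)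
  if 1 ≤ j ∧ j ≤ (N : ℤ) then
    C (Complex.I ^ (-j) * (-1 : ℂ) ^ (nuz - 1)) *
      ∑ r ∈ range (N - j.toNat + 1),
        C ((-1 : ℂ) ^ r * Acoef N m lamz nuz (N - j.toNat) r) *
          gegenCit (lam + (N : ℂ) - 1 - (r : ℂ))
            ((a : ℤ) - m + j + 2 * (1 - (N : ℤ) - nuz + (r : ℤ)))
  else if -(N : ℤ) ≤ j ∧ j ≤ 0 then
    C (Complex.I ^ j) *
      ∑ r ∈ range (N - (-j).toNat + 1),
        C ((-1 : ℂ) ^ r * Bcoef N m lamz nuz (N + (-j).toNat) r) *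
          gegenCit (lam + (N : ℂ) - 1 - (r : ℂ))
            ((a : ℤ) - m + (-j) - 2 * (N : ℤ) + 2 * (r : ℤ))
  else 0

/-- The explicit tuple of statement 16. -/
def F16 (N a : ℕ) (m q : ℤ) : ℤ → ℂ[X] := fun j =>
  let lam : ℂ := (N : ℂ) + 1 - (a : ℂ) - (q : ℂ)
  if 1 ≤ j ∧ j ≤ (N : ℤ) then
    C ((-Complex.I) ^ j.toNat * (((N + j.toNat).factorial : ℂ) / (N.factorial : ℂ)) *
        gratio (lam + ((((a : ℤ) - m - 1) / 2 : ℤ) : ℂ))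
          (((a : ℤ) - m + j - 1) / 2 + q - (N : ℤ) - ((a : ℤ) - m - 1) / 2)) *
      ∑ r ∈ range (N - j.toNat + 1),
        C (Dc N m q j.toNat r) *
          gegenCit (lam + (N : ℂ) - 1 - (r : ℂ))
            ((a : ℤ) - m + j + 2 * (q - 2 * (N : ℤ) + (r : ℤ)))
  else if -(N : ℤ) ≤ j ∧ j ≤ 0 then
    C (Complex.I ^ (-j).toNat * (((N + (-j).toNat).factorial : ℂ) / (N.factorial : ℂ)) *
        gratio (lam + ((((a : ℤ) - m - 1) / 2 : ℤ) : ℂ))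
          (((a : ℤ) - m + (-j) - 1) / 2 - ((a : ℤ) - m - 1) / 2)) *
      ∑ r ∈ range (N - (-j).toNat + 1),
        C (Cm lam a N m (-j).toNat r) *
          gegenCit (lam + (N : ℂ) - 1 - (r : ℂ))
            ((a : ℤ) - m - 2 * (N : ℤ) + (-j) + 2 * (r : ℤ))
  else 0

/-! ### Auxiliary material for Statement 12 -/

/-- Integer descending factorial as a product, related to `choose`. -/
lemma descProdZ (n : ℕ) : ∀ r : ℕ,
    (∏ i ∈ range r, ((n : ℤ) - (i : ℤ))) = ((Nat.factorial r * n.choose r : ℕ) : ℤ)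
  | 0 => by simp
  | (r + 1) => by
    rw [Finset.prod_range_succ, descProdZ n r]
    rcases lt_or_ge n (r + 1) with h | h
    · rcases Nat.eq_or_lt_of_le (Nat.lt_succ_iff.mp h) with h' | h'
      · subst h'
        simp [Nat.choose_eq_zero_of_lt (Nat.lt_succ_self n)]
      · simp [Nat.choose_eq_zero_of_lt h', Nat.choose_eq_zero_of_lt (by omega : n < r + 1)]
    · have hc : ((n.choose (r + 1) : ℤ)) * (r + 1) = (n.choose r : ℤ) * ((n : ℤ) - r) := by
        have h2 := Nat.choose_succ_right_eq n r
        have hsub : ((n - r : ℕ) : ℤ) = (n : ℤ) - r := by omega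
        rw [← hsub]
        exact_mod_cast h2
      push_cast [Nat.factorial_succ]
      linear_combination (-(Nat.factorial r : ℤ)) * hc

/-- Ascending factorial product in `ℤ` as `r! * choose`. -/
lemma ascProdZ (Ms : ℕ) : ∀ r : ℕ,
    (∏ i ∈ range r, ((Ms : ℤ) + 1 + (i : ℤ)))
      = ((Nat.factorial r * (Ms + r).choose r : ℕ) : ℤ)
  | 0 => by simp
  | (r + 1) => by
    rw [Finset.prod_range_succ, ascProdZ Ms r]
    have hc : ((Ms + r + 1) * (Ms + r).choose r : ℤ)
        = ((Ms + r + 1).choose (r + 1) : ℤ) * (r + 1) := by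
      exact_mod_cast congrArg (Nat.cast : ℕ → ℤ) (Nat.add_one_mul_choose_eq (Ms + r) r)
    push_cast [Nat.factorial_succ, show Ms + (r + 1) = Ms + r + 1 by omega]
    linear_combination (Nat.factorial r : ℤ) * hc

/-- Alternating sum of binomial coefficients (Vandermonde-type, base case). -/
lemma alt0 : ∀ (N K1 : ℕ), 1 ≤ K1 →
    (∑ r ∈ range (N + 1), (-1 : ℤ) ^ r * (K1.choose (N - r) : ℤ))
      = ((K1 - 1).choose N : ℤ)
  | 0, K1, _ => by simp
  | (N + 1), K1, h => by
    obtain ⟨K, rfl⟩ : ∃ K, K1 = K + 1 := ⟨K1 - 1, by omega⟩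
    rw [Finset.sum_range_succ']
    have hshift : ∀ r ∈ range (N + 1),
        (-1 : ℤ) ^ (r + 1) * ((K + 1).choose (N + 1 - (r + 1)) : ℤ)
          = -((-1 : ℤ) ^ r * ((K + 1).choose (N - r) : ℤ)) := by
      intro r _
      have hNr : N + 1 - (r + 1) = N - r := by omega
      rw [hNr, pow_succ]
      ring
    rw [Finset.sum_congr rfl hshift, Finset.sum_neg_distrib, alt0 N (K + 1) h]
    have hp := Nat.choose_succ_succ K N
    simp only [Nat.add_sub_cancel]
    push_cast [hp]
    ring

/-- Alternating Vandermonde identity. -/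
lemma vander : ∀ (M' : ℕ), ∀ (N K1 : ℕ), N + M' + 1 ≤ K1 →
    (∑ r ∈ range (N + 1),
        (-1 : ℤ) ^ r * ((M' + r).choose r : ℤ) * (K1.choose (N - r) : ℤ))
      = ((K1 - (M' + 1)).choose N : ℤ)
  | 0 => by
    intro N K1 h
    rw [← alt0 N K1 (by omega)]
    exact Finset.sum_congr rfl fun r _ => by simp
  | (M' + 1) => by
    intro N
    induction N with
    | zero => intro K1 _; simp
    | succ N ihN =>
      intro K1 h
      have key : (∑ r ∈ range (N + 1 + 1),
            ((-1 : ℤ) ^ r * ((M' + r).choose r : ℤ) * (K1.choose (N + 1 - r) : ℤ)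
              - (-1 : ℤ) ^ r * ((M' + 1 + r).choose r : ℤ) * (K1.choose (N + 1 - r) : ℤ)))
          = ∑ r ∈ range (N + 1),
              (-1 : ℤ) ^ r * ((M' + 1 + r).choose r : ℤ) * (K1.choose (N - r) : ℤ) := by
        rw [Finset.sum_range_succ']
        have h0 : ((-1 : ℤ) ^ 0 * ((M' + 0).choose 0 : ℤ) * (K1.choose (N + 1 - 0) : ℤ)
            - (-1 : ℤ) ^ 0 * ((M' + 1 + 0).choose 0 : ℤ) * (K1.choose (N + 1 - 0) : ℤ)) = 0 := by
          simp
        rw [h0, add_zero]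
        refine Finset.sum_congr rfl fun s _ => ?_
        have e2 : N + 1 - (s + 1) = N - s := by omega
        have e5 : M' + (s + 1) = M' + 1 + s := by omega
        have e6 : M' + 1 + (s + 1) = (M' + 1 + s) + 1 := by omega
        rw [e2, e5, e6, Nat.choose_succ_succ (M' + 1 + s) s, pow_succ]
        push_cast
        ring
      have key2 : (∑ r ∈ range (N + 1 + 1),
            (-1 : ℤ) ^ r * ((M' + r).choose r : ℤ) * (K1.choose (N + 1 - r) : ℤ))
          - (∑ r ∈ range (N + 1 + 1),
            (-1 : ℤ) ^ r * ((M' + 1 + r).choose r : ℤ) * (K1.choose (N + 1 - r) : ℤ))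
          = ∑ r ∈ range (N + 1),
              (-1 : ℤ) ^ r * ((M' + 1 + r).choose r : ℤ) * (K1.choose (N - r) : ℤ) := by
        rw [← Finset.sum_sub_distrib]
        exact key
      have hW := vander M' (N + 1) K1 (by omega)
      have hT := ihN K1 (by omega)
      obtain ⟨K, rfl⟩ : ∃ K, K1 = K + (M' + 2) := ⟨K1 - (M' + 2), by omega⟩
      have e1 : K + (M' + 2) - (M' + 1) = K + 1 := by omega
      have e2 : K + (M' + 2) - (M' + 1 + 1) = K := by omega
      rw [e1] at hW
      rw [e2] at hT
      rw [e2]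
      have hP : (((K + 1).choose (N + 1) : ℕ) : ℤ)
          = ((K.choose N : ℕ) : ℤ) + ((K.choose (N + 1) : ℕ) : ℤ) := by
        exact_mod_cast congrArg (Nat.cast : ℕ → ℤ) (Nat.choose_succ_succ K N)
      linarith [key2, hW, hT, hP]

/-- The central integer quantity: `Gz A Ms q K1 N`. -/
def Gz (A Ms q K1 N : ℕ) : ℤ :=
  ∑ r ∈ range (N + 1), (-1 : ℤ) ^ r * (Nat.factorial (A - r) : ℤ) *
    (∏ i ∈ range r, ((Ms : ℤ) + 1 + (i : ℤ))) * (q.choose r : ℤ) * (K1.choose (N - r) : ℤ)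

lemma gz_zero (A Ms q K1 : ℕ) : Gz A Ms q K1 0 = (Nat.factorial A : ℤ) := by
  simp [Gz]

lemma gz_top (A Ms K1 N : ℕ) (hNA : N ≤ A) (hK : N + Ms + 1 ≤ K1) :
    Gz A Ms A K1 N = (Nat.factorial A : ℤ) * ((K1 - (Ms + 1)).choose N : ℤ) := by
  rw [Gz, ← vander Ms N K1 hK, Finset.mul_sum]
  refine Finset.sum_congr rfl fun r hr => ?_
  have hrN : r ≤ N := by
    have := Finset.mem_range.mp hr; omega
  have hfac : ((A.choose r * Nat.factorial r * Nat.factorial (A - r) : ℕ) : ℤ)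
      = (Nat.factorial A : ℤ) := by
    exact_mod_cast congrArg (Nat.cast : ℕ → ℤ)
      (Nat.choose_mul_factorial_mul_factorial (le_trans hrN hNA))
  rw [ascProdZ]
  push_cast at hfac ⊢
  linear_combination ((-1 : ℤ) ^ r * ((Ms + r).choose r : ℤ) * (K1.choose (N - r) : ℤ)) * hfac

lemma gz_rec (A Ms q K1 N : ℕ) :
    Gz (A + 1) Ms q K1 (N + 1)
      = Gz (A + 1) Ms (q + 1) K1 (N + 1) + ((Ms : ℤ) + 1) * Gz A (Ms + 1) q K1 N := by
  have key : Gz (A + 1) Ms (q + 1) K1 (N + 1) - Gz (A + 1) Ms q K1 (N + 1)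
      = -(((Ms : ℤ) + 1) * Gz A (Ms + 1) q K1 N) := by
    rw [Gz, Gz, Gz, ← Finset.sum_sub_distrib]
    have hd : (∑ r ∈ range (N + 1 + 1),
          ((-1 : ℤ) ^ r * (Nat.factorial (A + 1 - r) : ℤ) *
              (∏ i ∈ range r, ((Ms : ℤ) + 1 + (i : ℤ))) * ((q + 1).choose r : ℤ) *
              (K1.choose (N + 1 - r) : ℤ)
            - (-1 : ℤ) ^ r * (Nat.factorial (A + 1 - r) : ℤ) *
              (∏ i ∈ range r, ((Ms : ℤ) + 1 + (i : ℤ))) * (q.choose r : ℤ) *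
              (K1.choose (N + 1 - r) : ℤ)))
        = ∑ s ∈ range (N + 1),
            -(((Ms : ℤ) + 1) * ((-1 : ℤ) ^ s * (Nat.factorial (A - s) : ℤ) *
              (∏ i ∈ range s, (((Ms + 1 : ℕ) : ℤ) + 1 + (i : ℤ))) * (q.choose s : ℤ) *
              (K1.choose (N - s) : ℤ))) := by
      rw [Finset.sum_range_succ']
      have h0 : ((-1 : ℤ) ^ 0 * (Nat.factorial (A + 1 - 0) : ℤ) *
            (∏ i ∈ range 0, ((Ms : ℤ) + 1 + (i : ℤ))) * ((q + 1).choose 0 : ℤ) *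
            (K1.choose (N + 1 - 0) : ℤ)
          - (-1 : ℤ) ^ 0 * (Nat.factorial (A + 1 - 0) : ℤ) *
            (∏ i ∈ range 0, ((Ms : ℤ) + 1 + (i : ℤ))) * (q.choose 0 : ℤ) *
            (K1.choose (N + 1 - 0) : ℤ)) = 0 := by simp
      rw [h0, add_zero]
      refine Finset.sum_congr rfl fun s _ => ?_
      have e1 : A + 1 - (s + 1) = A - s := by omega
      have e2 : N + 1 - (s + 1) = N - s := by omega
      have e3 : ((q + 1).choose (s + 1) : ℤ) - (q.choose (s + 1) : ℤ) = (q.choose s : ℤ) := by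
        have := Nat.choose_succ_succ q s
        push_cast [this]
        ring
      have e4 : (∏ i ∈ range (s + 1), ((Ms : ℤ) + 1 + (i : ℤ)))
          = ((Ms : ℤ) + 1) * ∏ i ∈ range s, (((Ms + 1 : ℕ) : ℤ) + 1 + (i : ℤ)) := by
        rw [Finset.prod_range_succ']
        have hstep : ∀ i ∈ range s, ((Ms : ℤ) + 1 + ((i + 1 : ℕ) : ℤ))
            = (((Ms + 1 : ℕ) : ℤ) + 1 + (i : ℤ)) := by
          intro i _; push_cast; ring
        rw [Finset.prod_congr rfl hstep]
        push_cast
        ring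
      rw [e1, e2, e4, pow_succ]
      linear_combination ((-1 : ℤ) ^ s * (Nat.factorial (A - s) : ℤ) * (-1) *
        (((Ms : ℤ) + 1) * ∏ i ∈ range s, (((Ms + 1 : ℕ) : ℤ) + 1 + (i : ℤ))) *
        (K1.choose (N - s) : ℤ)) * e3
    rw [hd, Finset.sum_neg_distrib, ← Finset.mul_sum]
  linarith [key]

lemma gz_pos : ∀ (N A Ms q K1 : ℕ), q ≤ A → N ≤ A → N + Ms + 1 ≤ K1 →
    0 < Gz A Ms q K1 N := by
  intro N
  induction N with
  | zero =>
    intro A Ms q K1 _ _ _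
    rw [gz_zero]
    exact_mod_cast Nat.factorial_pos A
  | succ N ihN =>
    intro A Ms q K1 hq hNA hK
    have inner : ∀ d A' Ms' q' K1', q' + d = A' → N + 1 ≤ A' → N + 1 + Ms' + 1 ≤ K1' →
        0 < Gz A' Ms' q' K1' (N + 1) := by
      intro d
      induction d with
      | zero =>
        intro A' Ms' q' K1' hqd hNA' hK'
        obtain rfl : q' = A' := by omega
        rw [gz_top q' Ms' K1' (N + 1) hNA' (by omega)]
        have h1 : 0 < (Nat.factorial q' : ℤ) := by exact_mod_cast Nat.factorial_pos q'
        have h2 : 0 < ((K1' - (Ms' + 1)).choose (N + 1) : ℤ) := by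
          exact_mod_cast Nat.choose_pos (by omega : N + 1 ≤ K1' - (Ms' + 1))
        positivity
      | succ d ihd =>
        intro A' Ms' q' K1' hqd hNA' hK'
        obtain ⟨A'', rfl⟩ : ∃ A'', A' = A'' + 1 := ⟨A' - 1, by omega⟩
        rw [gz_rec A'' Ms' q' K1' N]
        have h1 := ihd (A'' + 1) Ms' (q' + 1) K1' (by omega) hNA' hK'
        have h2 := ihN A'' (Ms' + 1) q' K1' (by omega) (by omega) (by omega)
        have h3 : (0 : ℤ) < (Ms' : ℤ) + 1 := by positivity
        nlinarith
    exact inner (A - q) A Ms q K1 (by omega) hNA hK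

/-- `β(λ,N,a,m)` is real and strictly positive for `λ = N+1-a-q`. -/
theorem stmt12 (N : ℕ) (m : ℤ) (hm : (N : ℤ) < m) (a : ℕ) (ha : m ≤ (a : ℤ))
    (q : ℤ) (hq1 : max 0 ((N : ℤ) - a + m) ≤ q) (hq2 : q ≤ 2 * N) :
    ∃ x : ℝ, 0 < x ∧ betaF ((N : ℂ) + 1 - (a : ℂ) - (q : ℂ)) N (a : ℤ) m = (x : ℂ) := by
  have hq0 : 0 ≤ q := le_trans (le_max_left _ _) hq1
  obtain ⟨qn, rfl⟩ : ∃ qn : ℕ, q = (qn : ℤ) := ⟨q.toNat, (Int.toNat_of_nonneg hq0).symm⟩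
  obtain ⟨Ms, rfl⟩ : ∃ Ms : ℕ, m = (N : ℤ) + Ms + 1 := ⟨(m - N - 1).toNat, by omega⟩
  set K1 : ℕ := (((a : ℤ) + ((N : ℤ) + Ms + 1)) / 2).toNat with hK1def
  have hK1 : (K1 : ℤ) = ((a : ℤ) + ((N : ℤ) + Ms + 1)) / 2 := by omega
  have hcond : N + Ms + 1 ≤ K1 := by omega
  have hqA : qn ≤ 2 * N := by omega
  have hpos := gz_pos N (2 * N) Ms qn K1 hqA (by omega) hcond
  refine ⟨((Gz (2 * N) Ms qn K1 N : ℤ) : ℝ), by exact_mod_cast hpos, ?_⟩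
  have hfloor : ((a : ℤ) + ((N : ℤ) + Ms + 1) + 2) / 2 = (K1 : ℤ) + 1 := by omega
  have hmain : betaF ((N : ℂ) + 1 - (a : ℂ) - ((qn : ℤ) : ℂ)) N (a : ℤ) ((N : ℤ) + Ms + 1)
      = ((Gz (2 * N) Ms qn K1 N : ℤ) : ℂ) := by
    simp only [betaF, C0r, Gz]
    push_cast
    refine Finset.sum_congr rfl fun r hr => ?_
    have hrN : r ≤ N := by have := Finset.mem_range.mp hr; omega
    have h1 : (∏ x ∈ range r, ((N : ℂ) + 1 - (a : ℂ) - (qn : ℂ) + (a : ℂ) - (N : ℂ) - 1 + (x : ℂ)))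
        = (-1 : ℂ) ^ r * ((r.factorial : ℂ) * (qn.choose r : ℂ)) := by
      have step : ∀ x ∈ range r,
          ((N : ℂ) + 1 - (a : ℂ) - (qn : ℂ) + (a : ℂ) - (N : ℂ) - 1 + (x : ℂ))
            = (-1) * ((qn : ℂ) - (x : ℂ)) := by
        intro x _; ring
      rw [Finset.prod_congr rfl step, Finset.prod_mul_distrib, Finset.prod_const,
        Finset.card_range]
      have hh := congrArg (fun z : ℤ => (z : ℂ)) (descProdZ qn r)
      push_cast at hh
      rw [hh]
    have h2 : (∏ x ∈ range r, ((N : ℂ) - ((N : ℂ) + (Ms : ℂ) + 1) - (x : ℂ)))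
        = (-1 : ℂ) ^ r * ((r.factorial : ℂ) * ((Ms + r).choose r : ℂ)) := by
      have step : ∀ x ∈ range r,
          ((N : ℂ) - ((N : ℂ) + (Ms : ℂ) + 1) - (x : ℂ))
            = (-1) * ((Ms : ℂ) + 1 + (x : ℂ)) := by
        intro x _; ring
      rw [Finset.prod_congr rfl step, Finset.prod_mul_distrib, Finset.prod_const,
        Finset.card_range]
      have hh := congrArg (fun z : ℤ => (z : ℂ)) (ascProdZ Ms r)
      push_cast at hh
      rw [hh]
    have h3 : (∏ i ∈ range (N - r),
          (((((a : ℤ) + ((N : ℤ) + (Ms : ℤ) + 1) + 2) / 2 : ℤ) : ℂ) - ((i : ℂ) + 1)))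
        = ((N - r).factorial : ℂ) * (K1.choose (N - r) : ℂ) := by
      have step : ∀ i ∈ range (N - r),
          (((((a : ℤ) + ((N : ℤ) + (Ms : ℤ) + 1) + 2) / 2 : ℤ) : ℂ) - ((i : ℂ) + 1))
            = ((K1 : ℂ) - (i : ℂ)) := by
        intro i _
        rw [hfloor]
        push_cast
        ring
      rw [Finset.prod_congr rfl step]
      have hh := congrArg (fun z : ℤ => (z : ℂ)) (descProdZ K1 (N - r))
      push_cast at hh
      rw [hh]
    have h4 : (∏ x ∈ range r, ((Ms : ℂ) + 1 + (x : ℂ)))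
        = (r.factorial : ℂ) * ((Ms + r).choose r : ℂ) := by
      have hh := congrArg (fun z : ℤ => (z : ℂ)) (ascProdZ Ms r)
      push_cast at hh
      rw [hh]
    rw [h1, h2, h3, h4]
    have hN0 : (N.factorial : ℂ) ≠ 0 := Nat.cast_ne_zero.mpr (Nat.factorial_ne_zero N)
    have hfacC : (N.choose r : ℂ) * (r.factorial : ℂ) * ((N - r).factorial : ℂ)
        = (N.factorial : ℂ) := by
      exact_mod_cast congrArg (Nat.cast : ℕ → ℂ)
        (Nat.choose_mul_factorial_mul_factorial hrN)
    have hsq : (-1 : ℂ) ^ r * (-1 : ℂ) ^ r = 1 := by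
      rw [← pow_add]
      exact Even.neg_one_pow ⟨r, rfl⟩
    field_simp
    linear_combination ((-1 : ℂ) ^ r * (-1 : ℂ) ^ r * (-1 : ℂ) ^ r *
        ((2 * N - r).factorial : ℂ) * (r.factorial : ℂ) * ((Ms + r).choose r : ℂ) *
        (qn.choose r : ℂ) * (K1.choose (N - r) : ℂ)) * hfacC
      + ((-1 : ℂ) ^ r * ((2 * N - r).factorial : ℂ) * (r.factorial : ℂ) *
        ((Ms + r).choose r : ℂ) * (qn.choose r : ℂ) * (K1.choose (N - r) : ℂ) *
        (N.factorial : ℂ)) * hsq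
      + (((-1 : ℂ) ^ r * (-1 : ℂ) ^ r - (-1 : ℂ) ^ r * (-1 : ℂ) ^ r * (-1 : ℂ) ^ r) *
          (((2 * N - r).factorial : ℂ) * (r.factorial : ℂ) * ((Ms + r).choose r : ℂ) *
          (qn.choose r : ℂ) * (K1.choose (N - r) : ℂ))) * hfacC
      + ((((2 * N - r).factorial : ℂ) * (r.factorial : ℂ) * ((Ms + r).choose r : ℂ) *
          (qn.choose r : ℂ) * (K1.choose (N - r) : ℂ)) * (N.factorial : ℂ) *
          (1 - (-1 : ℂ) ^ r)) * hsq
  rw [hmain]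
  push_cast
  ring
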